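/- arXiv:2510.00230 — 3 statements merged into one kernel-verified Lean document; each statement's English description precedes it below -/
import Mathlib

section
/- Let δ ∈ (0, 1/4], a ∈ (0, π), λ ≥ 1, M ≥ 1. Let g be continuous on the closed unit disk, analytic on its interior, with |g(δ)| ≥ 1 and |g(z)| ≤ λM/γ whenever |z| ≤ 1-γ for γ ∈ (0,1]. Let Γ be the circle of radius 1-δ centered at δ and J the closed arc of Γ with midpoint 1 and arc length a. Then max_{z∈J} |g(z)| ≥ (δ/(λM))^{C/a} for some absolute constant C > 0. -/
open Real Finset


namespace Stmt13Aux

lemma pow_self_le (n : ℕ) : (n:ℝ)^n ≤ 3^n * n.factorial := by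
  have h := Real.pow_div_factorial_le_exp (x := (n:ℝ)) (Nat.cast_nonneg n) n
  have hf : (0:ℝ) < n.factorial := by positivity
  rw [div_le_iff₀ hf] at h
  have h2 : Real.exp (n:ℝ) ≤ 3^n := by
    calc Real.exp (n:ℝ) = Real.exp 1 ^ n := by
          rw [← Real.exp_nat_mul]; norm_num
    _ ≤ 3^n := by
          apply pow_le_pow_left₀ (Real.exp_nonneg 1)
          linarith [Real.exp_one_lt_d9]
  calc (n:ℝ)^n ≤ Real.exp n * n.factorial := h
  _ ≤ 3^n * n.factorial := by
      apply mul_le_mul_of_nonneg_right h2 hf.le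

noncomputable def nr (p x : ℝ) : ℝ := x - p * round (x / p)

lemma abs_nr_le {p : ℝ} (hp : 0 < p) (x : ℝ) : |nr p x| ≤ p / 2 := by
  have h := abs_sub_round (x / p)
  have he : |nr p x| = p * |x/p - round (x/p)| := by
    have : nr p x = p * (x/p - round (x/p)) := by
      rw [nr, mul_sub, mul_div_cancel₀ x hp.ne']
    rw [this, abs_mul, abs_of_pos hp]
  rw [he]
  calc p * |x/p - round (x/p)| ≤ p * (1/2) := by
        apply mul_le_mul_of_nonneg_left h hp.le
  _ = p/2 := by ring

lemma nr_min {p : ℝ} (hp : 0 < p) (x : ℝ) (t : ℤ) : |nr p x| ≤ |x - p * t| := by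
  rcases eq_or_ne t (round (x/p)) with rfl | h
  · simp only [nr]; exact le_refl _
  · have h1 : |nr p x| ≤ p/2 := abs_nr_le hp x
    have h2 : (1:ℝ) ≤ |((round (x/p) : ℤ) : ℝ) - (t:ℝ)| := by
      have hne : (round (x/p) : ℤ) - t ≠ 0 := sub_ne_zero.2 (Ne.symm h)
      have h3 := Int.one_le_abs hne
      have : ((|round (x/p) - t| : ℤ) : ℝ) = |((round (x/p) : ℤ) : ℝ) - (t:ℝ)| := by
        push_cast
        rfl
      rw [← this]; exact_mod_cast h3
    have key : x - p*t = nr p x + p * (((round (x/p) : ℤ) : ℝ) - t) := by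
      rw [nr]; ring
    have h4 : p * 1 ≤ p * |((round (x/p) : ℤ) : ℝ) - (t:ℝ)| :=
      mul_le_mul_of_nonneg_left h2 hp.le
    have h5 : |p * (((round (x/p) : ℤ) : ℝ) - t)| ≤ |x - p*t| + |nr p x| := by
      rw [key]
      have := abs_sub (nr p x + p * (((round (x/p) : ℤ) : ℝ) - t)) (nr p x)
      calc |p * (((round (x/p) : ℤ) : ℝ) - t)|
          = |(nr p x + p * (((round (x/p) : ℤ) : ℝ) - t)) - nr p x| := by ring_nf
      _ ≤ |nr p x + p * (((round (x/p) : ℤ) : ℝ) - t)| + |nr p x| := abs_sub _ _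
    rw [abs_mul, abs_of_pos hp] at h5
    linarith

lemma nr_rev_triangle {p : ℝ} (hp : 0 < p) (x y : ℝ) :
    |nr p y| - |nr p x| ≤ |nr p (x + y)| := by
  have h := nr_min hp y ((round ((x+y)/p)) - round (x/p))
  have key : y - p * (((round ((x+y)/p) - round (x/p) : ℤ)) : ℝ) = nr p (x+y) - nr p x := by
    simp only [nr]; push_cast; ring
  rw [key] at h
  have := abs_sub (nr p (x+y)) (nr p x)
  calc |nr p y| - |nr p x| ≤ |nr p (x+y) - nr p x| - |nr p x| := by linarith
  _ ≤ (|nr p (x+y)| + |nr p x|) - |nr p x| := by linarith [abs_sub (nr p (x+y)) (nr p x)]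
  _ = |nr p (x+y)| := by ring

lemma int_rep_lb {n k : ℕ} (hk : k ≤ n) (u : ℤ) :
    min (k:ℝ) ((n:ℝ) - k) ≤ |(k:ℝ) - n * u| := by
  have hkn : (k:ℝ) ≤ n := by exact_mod_cast hk
  rcases le_or_gt u 0 with h | h
  · have hu : (u:ℝ) ≤ 0 := by exact_mod_cast h
    have : (k:ℝ) ≤ (k:ℝ) - n*u := by nlinarith [Nat.cast_nonneg (α := ℝ) n]
    exact le_trans (min_le_left _ _) (le_trans this (le_abs_self _))
  · have hu : (1:ℝ) ≤ u := by exact_mod_cast h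
    have h2 : (n:ℝ) - k ≤ n*u - k := by nlinarith [Nat.cast_nonneg (α := ℝ) n]
    calc min (k:ℝ) ((n:ℝ)-k) ≤ (n:ℝ) - k := min_le_right _ _
    _ ≤ (n:ℝ)*u - k := h2
    _ ≤ |(k:ℝ) - n*u| := by rw [abs_sub_comm]; linarith [le_abs_self ((n:ℝ)*u - k)]

lemma nr_int_lb {n k : ℕ} (hn : 0 < n) (hk : k ≤ n) (q : ℤ) :
    min (k:ℝ) ((n:ℝ) - k) ≤ |nr n ((k:ℝ) - n * q)| := by
  have heq : nr n ((k:ℝ) - n*q) = (k:ℝ) - n * ((q + round (((k:ℝ) - n*q)/n) : ℤ) : ℝ) := by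
    simp only [nr]; push_cast; ring
  rw [heq]
  exact_mod_cast int_rep_lb hk _

end Stmt13Aux
namespace Stmt13Aux2

noncomputable def wa (δ φ : ℝ) : ℂ := (δ : ℂ) + ((1 - δ : ℝ) : ℂ) * Complex.exp ((φ:ℂ) * Complex.I)

lemma abs_wa_sq (δ x : ℝ) :
    (‖wa δ x‖)^2 = 1 - 2*δ*(1-δ)*(1 - Real.cos x) := by
  rw [Complex.sq_norm, wa, Complex.exp_mul_I]
  have hc := Real.sin_sq_add_cos_sq x
  simp only [Complex.normSq_apply, Complex.add_re, Complex.add_im, Complex.ofReal_re,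
    Complex.ofReal_im, Complex.mul_re, Complex.mul_im, Complex.cos_ofReal_re,
    Complex.cos_ofReal_im, Complex.sin_ofReal_re, Complex.sin_ofReal_im, Complex.I_re,
    Complex.I_im]
  linear_combination (1-δ)^2 * hc

lemma abs_wa_le_one {δ : ℝ} (h0 : 0 ≤ δ) (h1 : δ ≤ 1) (x : ℝ) : ‖wa δ x‖ ≤ 1 := by
  have h := abs_wa_sq δ x
  have hA := norm_nonneg (wa δ x)
  nlinarith [sq_nonneg (‖wa δ x‖ - 1),
    mul_nonneg (mul_nonneg h0 (by linarith : (0:ℝ) ≤ 1-δ))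
      (by linarith [Real.cos_le_one x] : (0:ℝ) ≤ 1 - Real.cos x)]

lemma one_sub_abs_wa {δ : ℝ} (h0 : 0 ≤ δ) (h1 : δ ≤ 1) (x : ℝ) :
    δ*(1-δ)*(1 - Real.cos x) ≤ 1 - ‖wa δ x‖ := by
  have h := abs_wa_sq δ x
  have hA := norm_nonneg (wa δ x)
  have hle := abs_wa_le_one h0 h1 x
  nlinarith [sq_nonneg (‖wa δ x‖ - 1)]

lemma wa_eq_of_period {δ x : ℝ} (t : ℤ) : wa δ (x + t * (2*Real.pi)) = wa δ x := by
  rw [wa, wa]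
  congr 1
  congr 1
  push_cast
  rw [add_mul, Complex.exp_add]
  have : ((t:ℂ) * (2*(Real.pi:ℂ)) * Complex.I) = (t:ℂ) * (2*(Real.pi:ℂ) * Complex.I) := by ring
  rw [this, Complex.exp_int_mul_two_pi_mul_I, mul_one]

end Stmt13Aux2

namespace Stmt13Aux3

lemma gamma_pos {δ nR kR : ℝ} (hδ0 : 0 < δ) (hδ1 : δ < 1) (h1 : 1 ≤ kR) (h2 : kR + 1 ≤ nR) :
    0 < 2*δ*(1-δ)*(kR*(nR-kR))^2/nR^4 := by
  have hpos : 0 < kR*(nR-kR) := by nlinarith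
  have hn : (0:ℝ) < nR := by linarith
  have h2δ : 0 < 2*δ*(1-δ) := by nlinarith
  exact div_pos (mul_pos h2δ (pow_pos hpos 2)) (pow_pos hn 4)

lemma gamma_le_one {δ nR kR : ℝ} (hδ0 : 0 < δ) (hδ4 : δ ≤ 1/4) (h1 : 1 ≤ kR) (h2 : kR + 1 ≤ nR) :
    2*δ*(1-δ)*(kR*(nR-kR))^2/nR^4 ≤ 1 := by
  have hn : (0:ℝ) < nR := by linarith
  rw [div_le_one (by positivity)]
  have h3 : kR*(nR-kR) ≤ nR^2/4 := by nlinarith [sq_nonneg (nR - 2*kR)]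
  have h4 : 0 ≤ kR*(nR-kR) := by nlinarith
  have h5 : (kR*(nR-kR))^2 ≤ (nR^2/4)^2 := by nlinarith
  have h6 : 2*δ*(1-δ) ≤ 1/2 := by nlinarith
  have h7 : (kR*(nR-kR))^2 ≤ nR^4/16 := by nlinarith
  have h8 := mul_le_mul h6 h7 (sq_nonneg (kR*(nR-kR))) (by norm_num : (0:ℝ) ≤ 1/2)
  nlinarith [h8, pow_pos hn 4]

lemma base_ineq {δ lam M nR cN : ℝ} (hδ0 : 0 < δ) (hδ4 : δ ≤ 1/4) (hlM : 1 ≤ lam*M)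
    (hn : 0 < nR) (hcN : 1 ≤ cN) (h2 : nR ≤ 2*cN) :
    (δ/(lam*M))^6 ≤ (2*δ*(1-δ)/(nR^4*(lam*M))) * cN^4/81 := by
  have hlM0 : (0:ℝ) < lam*M := by linarith
  have hr0 : 0 < δ/(lam*M) := div_pos hδ0 hlM0
  have hr4 : δ/(lam*M) ≤ 1/4 := by rw [div_le_iff₀ hlM0]; nlinarith
  have h5 : (δ/(lam*M))^5 ≤ (1/4)^5 := pow_le_pow_left₀ hr0.le hr4 5
  have h6 : (δ/(lam*M))^6 ≤ (δ/(lam*M)) * (1/1024) := by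
    calc (δ/(lam*M))^6 = (δ/(lam*M)) * (δ/(lam*M))^5 := by ring
    _ ≤ (δ/(lam*M)) * (1/1024) := by nlinarith
  have hn4 : nR^4 ≤ 16*cN^4 := by
    calc nR^4 ≤ (2*cN)^4 := pow_le_pow_left₀ hn.le h2 4
    _ = 16*cN^4 := by ring
  have hT : (2*δ*(1-δ)/(nR^4*(lam*M))) * cN^4/81 = (2*δ*(1-δ)*cN^4)/(81*(nR^4*(lam*M))) := by
    ring
  have h7 : (δ/(lam*M)) * (1/1024) ≤ (2*δ*(1-δ)*cN^4)/(81*(nR^4*(lam*M))) := by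
    rw [show (δ/(lam*M)) * (1/1024) = δ/(1024*(lam*M)) by ring]
    rw [div_le_div_iff₀ (by positivity) (by positivity)]
    have hA : 81*δ*(lam*M)*nR^4 ≤ 81*δ*(lam*M)*(16*cN^4) :=
      mul_le_mul_of_nonneg_left hn4 (by positivity)
    have hB : (3/4 : ℝ) ≤ 1-δ := by linarith
    have hC : 2048*δ*(lam*M)*cN^4*(3/4) ≤ 2048*δ*(lam*M)*cN^4*(1-δ) :=
      mul_le_mul_of_nonneg_left hB (by positivity)
    have hD : (0:ℝ) ≤ δ*(lam*M)*cN^4 := by positivity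
    nlinarith [hA, hC, hD]
  rw [hT]
  linarith

end Stmt13Aux3

open Stmt13Aux Stmt13Aux2 Stmt13Aux3 in
set_option maxHeartbeats 1600000 in
/-- Arc lower bound for analytic functions (corrected Lemma 4.1 of Borwein–Erdélyi):
on the closed arc `J` of the circle of radius `1 - δ` centered at `δ`, with midpoint `1`
and arc length `a`, the maximum of `|g|` is at least `(δ/(λM))^{C/a}`. -/
theorem stmt13 : ∃ C : ℝ, 0 < C ∧
    ∀ (δ a lam M : ℝ) (g : ℂ → ℂ),
      0 < δ → δ ≤ 1 / 4 → 0 < a → a < Real.pi → 1 ≤ lam → 1 ≤ M →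
      ContinuousOn g (Metric.closedBall (0 : ℂ) 1) →
      DifferentiableOn ℂ g (Metric.ball (0 : ℂ) 1) →
      1 ≤ ‖g (δ : ℂ)‖ →
      (∀ γ : ℝ, 0 < γ → γ ≤ 1 → ∀ z : ℂ, ‖z‖ ≤ 1 - γ →
        ‖g z‖ ≤ lam * M / γ) →
      ∃ z : ℂ, (∃ φ : ℝ, |φ| ≤ a / (2 * (1 - δ)) ∧
          z = (δ : ℂ) + ((1 - δ : ℝ) : ℂ) * Complex.exp (φ * Complex.I)) ∧
        (δ / (lam * M)) ^ (C / a) ≤ ‖g z‖ := by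
  refine ⟨24 * Real.pi, by positivity, ?_⟩
  intro δ a lam M g hδ0 hδ4 ha0 haπ hlam hM hgc hgd hgδ hbound
  have hπ := Real.pi_pos
  have h1δ : (0:ℝ) < 1 - δ := by linarith
  have hδ1 : δ ≤ 1 := by linarith
  have hlM : (1:ℝ) ≤ lam * M := by nlinarith
  have hlM0 : (0:ℝ) < lam * M := by linarith
  set m : ℕ := ⌈Real.pi / a⌉₊ with hm
  have hm1 : 1 ≤ m := Nat.one_le_ceil_iff.mpr (by positivity)
  have hmπ : Real.pi / a ≤ (m:ℝ) := Nat.le_ceil _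
  have hm2 : (m:ℝ) ≤ 2 * Real.pi / a := by
    have h1 : (m:ℝ) < Real.pi / a + 1 := Nat.ceil_lt_add_one (by positivity)
    have h2 : (1:ℝ) ≤ Real.pi / a := (one_le_div ha0).mpr haπ.le
    calc (m:ℝ) ≤ Real.pi/a + 1 := h1.le
    _ ≤ Real.pi/a + Real.pi/a := by linarith
    _ = 2*Real.pi/a := by ring
  set n : ℕ := 2 * m with hn
  have hn0 : 0 < n := by omega
  have hn2 : 2 ≤ n := by omega
  have hnR : (0:ℝ) < (n:ℝ) := by exact_mod_cast hn0
  have hnm : (n:ℝ) = 2*(m:ℝ) := by rw [hn]; push_cast; ring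
  set α := a / (2*(1-δ)) with hα
  have hα0 : 0 < α := by positivity
  have hπnα : Real.pi / n ≤ α := by
    rw [hα, div_le_div_iff₀ hnR (by linarith), hnm]
    have hπam : Real.pi ≤ a * m := by
      rw [div_le_iff₀ ha0] at hmπ
      linarith [hmπ]
    nlinarith
  -- the arc J and the max of |g| on it
  set J : Set ℂ := (fun φ : ℝ => wa δ φ) '' Set.Icc (-α) α with hJdef
  have hJsub : J ⊆ Metric.closedBall (0:ℂ) 1 := by
    rintro _ ⟨φ, _, rfl⟩
    rw [Metric.mem_closedBall, dist_zero_right]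
    exact abs_wa_le_one hδ0.le hδ1 φ
  have hwacont : Continuous (fun φ : ℝ => wa δ φ) := by
    unfold wa
    fun_prop
  have hJcomp : IsCompact J := isCompact_Icc.image hwacont
  have hJne : J.Nonempty := ⟨wa δ 0, ⟨0, by constructor <;> linarith, rfl⟩⟩
  obtain ⟨zs, hzsJ, hzsmax⟩ := hJcomp.exists_isMaxOn hJne
    (continuous_norm.comp_continuousOn (hgc.mono hJsub))
  set G := ‖g zs‖ with hG
  have hG0 : 0 ≤ G := norm_nonneg _
  -- the auxiliary product function
  set γ : ℕ → ℝ := fun k => 2*δ*(1-δ)*((k:ℝ)*((n:ℝ)-(k:ℝ)))^2/(n:ℝ)^4 with hγdef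
  set h : ℂ → ℂ := fun z =>
    ∏ j ∈ Finset.range n, g ((δ:ℂ) + Complex.exp (((2*Real.pi*(j:ℝ)/(n:ℝ) : ℝ):ℂ) * Complex.I) * (z - (δ:ℂ))) with hhdef
  -- each affine rotation maps the ball/closed ball around δ into the unit ball
  have habs1 : ∀ j : ℕ, ‖Complex.exp (((2*Real.pi*(j:ℝ)/(n:ℝ) : ℝ):ℂ) * Complex.I)‖ = 1 :=
    fun j => Complex.norm_exp_ofReal_mul_I _
  have hmapsto_cb : ∀ j : ℕ, Set.MapsTo (fun z : ℂ => (δ:ℂ) + Complex.exp (((2*Real.pi*(j:ℝ)/(n:ℝ) : ℝ):ℂ) * Complex.I) * (z - (δ:ℂ)))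
      (Metric.closedBall (δ:ℂ) (1-δ)) (Metric.closedBall (0:ℂ) 1) := by
    intro j z hz
    rw [Metric.mem_closedBall, Complex.dist_eq] at hz
    rw [Metric.mem_closedBall, dist_zero_right]
    calc ‖(δ:ℂ) + Complex.exp (((2*Real.pi*(j:ℝ)/(n:ℝ) : ℝ):ℂ) * Complex.I) * (z - (δ:ℂ))‖
        ≤ ‖(δ:ℂ)‖ + ‖Complex.exp (((2*Real.pi*(j:ℝ)/(n:ℝ) : ℝ):ℂ) * Complex.I) * (z - (δ:ℂ))‖ := norm_add_le _ _
    _ = δ + ‖z - (δ:ℂ)‖ := by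
        rw [norm_mul, habs1 j, one_mul,
          Complex.norm_real, Real.norm_eq_abs, abs_of_pos hδ0]
    _ ≤ δ + (1-δ) := by linarith
    _ = 1 := by ring
  have hmapsto_b : ∀ j : ℕ, Set.MapsTo (fun z : ℂ => (δ:ℂ) + Complex.exp (((2*Real.pi*(j:ℝ)/(n:ℝ) : ℝ):ℂ) * Complex.I) * (z - (δ:ℂ)))
      (Metric.ball (δ:ℂ) (1-δ)) (Metric.ball (0:ℂ) 1) := by
    intro j z hz
    rw [Metric.mem_ball, Complex.dist_eq] at hz
    rw [Metric.mem_ball, dist_zero_right]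
    calc ‖(δ:ℂ) + Complex.exp (((2*Real.pi*(j:ℝ)/(n:ℝ) : ℝ):ℂ) * Complex.I) * (z - (δ:ℂ))‖
        ≤ ‖(δ:ℂ)‖ + ‖Complex.exp (((2*Real.pi*(j:ℝ)/(n:ℝ) : ℝ):ℂ) * Complex.I) * (z - (δ:ℂ))‖ := norm_add_le _ _
    _ = δ + ‖z - (δ:ℂ)‖ := by
        rw [norm_mul, habs1 j, one_mul,
          Complex.norm_real, Real.norm_eq_abs, abs_of_pos hδ0]
    _ < δ + (1-δ) := by linarith
    _ = 1 := by ring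
  have haffdiff : ∀ j : ℕ, Differentiable ℂ (fun z : ℂ => (δ:ℂ) + Complex.exp (((2*Real.pi*(j:ℝ)/(n:ℝ) : ℝ):ℂ) * Complex.I) * (z - (δ:ℂ))) := by
    intro j
    fun_prop
  have hdiff : DiffContOnCl ℂ h (Metric.ball (δ:ℂ) (1-δ)) := by
    constructor
    · apply DifferentiableOn.fun_finsetProd
      intro j _
      exact (hgd.comp ((haffdiff j).differentiableOn) (hmapsto_b j))
    · rw [closure_ball ((δ:ℂ)) (ne_of_gt h1δ)]
      apply continuousOn_finset_prod
      intro j _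
      exact hgc.comp ((haffdiff j).continuous.continuousOn) (hmapsto_cb j)
  have hhδ : 1 ≤ ‖h (δ:ℂ)‖ := by
    have he : h (δ:ℂ) = (g (δ:ℂ))^n := by
      rw [hhdef]
      simp [Finset.prod_const]
    rw [he, norm_pow]
    exact one_le_pow₀ hgδ
  have hγpos : ∀ k : ℕ, 1 ≤ k → k ≤ n-1 → 0 < γ k := by
    intro k h1 h2
    have hkn : (k:ℝ) + 1 ≤ (n:ℝ) := by exact_mod_cast (by omega : k + 1 ≤ n)
    have hk1 : (1:ℝ) ≤ (k:ℝ) := by exact_mod_cast h1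
    simp only [hγdef]
    exact gamma_pos hδ0 (by linarith) hk1 hkn
  have hγle1 : ∀ k : ℕ, 1 ≤ k → k ≤ n-1 → γ k ≤ 1 := by
    intro k h1 h2
    have hkn : (k:ℝ) + 1 ≤ (n:ℝ) := by exact_mod_cast (by omega : k + 1 ≤ n)
    have hk1 : (1:ℝ) ≤ (k:ℝ) := by exact_mod_cast h1
    simp only [hγdef]
    exact gamma_le_one hδ0 hδ4 hk1 hkn
  set P : ℝ := ∏ i ∈ Finset.range (n-1), (lam*M/γ (i+1)) with hPdef
  have hPpos : 0 < P := by
    rw [hPdef]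
    apply Finset.prod_pos
    intro i hi
    have := hγpos (i+1) (by omega) (by have := Finset.mem_range.mp hi; omega)
    positivity
  have key : ∀ z ∈ Metric.sphere (δ:ℂ) (1-δ), ‖h z‖ ≤ P * G := by
    intro z hz
    have hznorm : ‖z - (δ:ℂ)‖ = 1 - δ := by
      rw [mem_sphere_iff_norm] at hz
      exact hz
    set θ : ℝ := Complex.arg (z - (δ:ℂ)) with hθ
    set s : ℝ := θ * (n:ℝ) / (2*Real.pi) with hs
    have hfact : ∀ j : ℕ,
        (δ:ℂ) + Complex.exp (((2*Real.pi*(j:ℝ)/(n:ℝ) : ℝ):ℂ) * Complex.I) * (z - (δ:ℂ))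
          = wa δ ((2*Real.pi/(n:ℝ))*(s + (j:ℝ))) := by
      intro j
      have hz' : z - (δ:ℂ) = ((1-δ:ℝ):ℂ) * Complex.exp ((θ:ℂ) * Complex.I) := by
        conv_lhs => rw [← Complex.norm_mul_exp_arg_mul_I (z - (δ:ℂ))]
        rw [hznorm]
      rw [hz', wa]
      rw [← mul_assoc, mul_comm (Complex.exp _) (((1-δ:ℝ):ℂ)), mul_assoc, ← Complex.exp_add]
      congr 2
      have harg : (2*Real.pi*(j:ℝ)/(n:ℝ) : ℝ) + θ = (2*Real.pi/(n:ℝ))*(s + (j:ℝ)) := by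
        rw [hs]; field_simp; ring
      rw [← harg]
      push_cast
      ring
    set A : ℕ → ℝ := fun j => ‖g (wa δ ((2*Real.pi/(n:ℝ))*(s + (j:ℝ))))‖ with hA
    have hform : ‖h z‖ = ∏ j ∈ Finset.range n, A j := by
      rw [hhdef, norm_prod]
      exact Finset.prod_congr rfl (fun j _ => by rw [hfact j])
    set j0 : ℕ := ((- round s) % (n:ℤ)).toNat with hj0
    have hj0n : j0 < n := by
      have h1 : (0:ℤ) ≤ (- round s) % (n:ℤ) := Int.emod_nonneg _ (by exact_mod_cast hn0.ne')
      have h2 : (- round s) % (n:ℤ) < (n:ℤ) := Int.emod_lt_of_pos _ (by exact_mod_cast hn0)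
      omega
    have hdj0 : |nr (n:ℝ) (s + (j0:ℝ))| ≤ 1/2 := by
      obtain ⟨u, hu⟩ : ∃ u : ℤ, (j0:ℤ) = - round s + (n:ℤ) * u := by
        refine ⟨-((- round s) / (n:ℤ)), ?_⟩
        rw [hj0, Int.toNat_of_nonneg (Int.emod_nonneg _ (by exact_mod_cast hn0.ne')), Int.emod_def]
        ring
      have h1 := nr_min hnR (s + (j0:ℝ)) u
      have h2 : s + (j0:ℝ) - (n:ℝ)*(u:ℝ) = s - round s := by
        have h3 : ((j0:ℤ):ℝ) = -(((round s : ℤ)):ℝ) + ((n:ℤ):ℝ)*((u:ℤ):ℝ) := by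
          exact_mod_cast congrArg (Int.cast : ℤ → ℝ) hu
        push_cast at h3 ⊢
        linarith
      rw [h2] at h1
      exact h1.trans (abs_sub_round s)
    set e : ℕ → ℕ := fun k => (k + j0) % n with he
    have hinv1 : ∀ b, b < n → e ((b + (n - j0)) % n) = b := by
      intro b hb
      simp only [he]
      rw [Nat.mod_add_mod, show b + (n - j0) + j0 = b + n by omega, Nat.add_mod_right,
        Nat.mod_eq_of_lt hb]
    have hinv2 : ∀ b, b < n → (e b + (n - j0)) % n = b := by
      intro b hb
      simp only [he]
      rw [Nat.mod_add_mod, show b + j0 + (n - j0) = b + n by omega, Nat.add_mod_right,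
        Nat.mod_eq_of_lt hb]
    have hreindex : ∏ j ∈ Finset.range n, A j = ∏ k ∈ Finset.range n, A (e k) := by
      apply Finset.prod_nbij' (i := fun b => (b + (n - j0)) % n) (j := e)
      · intro b hb; exact Finset.mem_range.mpr (Nat.mod_lt _ hn0)
      · intro b hb; exact Finset.mem_range.mpr (Nat.mod_lt _ hn0)
      · intro b hb; exact hinv1 b (Finset.mem_range.mp hb)
      · intro b hb; exact hinv2 b (Finset.mem_range.mp hb)
      · intro b hb
        rw [hinv1 b (Finset.mem_range.mp hb)]
    have hsplit : ∏ k ∈ Finset.range n, A (e k)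
        = (∏ i ∈ Finset.range (n-1), A (e (i+1))) * A (e 0) := by
      have h' := Finset.prod_range_succ' (fun k => A (e k)) (n-1)
      rw [show n - 1 + 1 = n by omega] at h'
      exact h'
    have hAe0 : A (e 0) ≤ G := by
      have he0 : e 0 = j0 := by simp only [he]; rw [Nat.zero_add, Nat.mod_eq_of_lt hj0n]
      have hper : wa δ ((2*Real.pi/(n:ℝ))*(s + (j0:ℝ)))
          = wa δ ((2*Real.pi/(n:ℝ)) * nr (n:ℝ) (s + (j0:ℝ))) := by
        have harg : (2*Real.pi/(n:ℝ))*(s + (j0:ℝ))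
            = (2*Real.pi/(n:ℝ)) * nr (n:ℝ) (s + (j0:ℝ)) + ((round ((s + (j0:ℝ))/(n:ℝ)) : ℤ)) * (2*Real.pi) := by
          rw [nr]; field_simp; ring
        rw [harg, wa_eq_of_period]
      have hφα : |(2*Real.pi/(n:ℝ)) * nr (n:ℝ) (s + (j0:ℝ))| ≤ α := by
        rw [abs_mul, abs_of_pos (by positivity : (0:ℝ) < 2*Real.pi/(n:ℝ))]
        calc (2*Real.pi/(n:ℝ)) * |nr (n:ℝ) (s + (j0:ℝ))| ≤ (2*Real.pi/(n:ℝ)) * (1/2) := by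
              apply mul_le_mul_of_nonneg_left hdj0 (by positivity)
        _ = Real.pi/(n:ℝ) := by ring
        _ ≤ α := hπnα
      have hmem : wa δ ((2*Real.pi/(n:ℝ))*(s + (j0:ℝ))) ∈ J := by
        rw [hper, hJdef]
        exact ⟨(2*Real.pi/(n:ℝ)) * nr (n:ℝ) (s + (j0:ℝ)),
          Set.mem_Icc.mpr ⟨(abs_le.mp hφα).1, (abs_le.mp hφα).2⟩, rfl⟩
      simp only [hA, he0]
      exact hzsmax hmem
    have hAk : ∀ i ∈ Finset.range (n-1), A (e (i+1)) ≤ lam*M/γ (i+1) := by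
      intro i hi
      have hik : i + 1 ≤ n - 1 := by have := Finset.mem_range.mp hi; omega
      set k := i + 1 with hkdef
      have hk1 : 1 ≤ k := by omega
      have hkn : k ≤ n := by omega
      have hkRn : (k:ℝ) + 1 ≤ (n:ℝ) := by exact_mod_cast (by omega : k + 1 ≤ n)
      have hkR1 : (1:ℝ) ≤ (k:ℝ) := by exact_mod_cast hk1
      set j := e k with hjdef
      obtain ⟨q, hq⟩ : ∃ q : ℕ, (j:ℝ) = (k:ℝ) + (j0:ℝ) - (n:ℝ)*(q:ℝ) := by
        refine ⟨(k + j0)/n, ?_⟩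
        have h0 := Nat.mod_add_div (k + j0) n
        have hcast : (j:ℝ) + (n:ℝ)*(((k+j0)/n : ℕ):ℝ) = (k:ℝ) + (j0:ℝ) := by
          have : ((k + j0) % n : ℕ) + n * ((k + j0)/n) = k + j0 := h0
          exact_mod_cast congrArg (Nat.cast : ℕ → ℝ) this
        linarith
      have hmin : min (k:ℝ) ((n:ℝ)-(k:ℝ)) ≤ |nr (n:ℝ) ((j:ℝ) - (j0:ℝ))| := by
        have heq : (j:ℝ) - (j0:ℝ) = (k:ℝ) - (n:ℝ)*(((q:ℤ)):ℝ) := by rw [hq]; push_cast; ring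
        rw [heq]
        exact nr_int_lb hn0 hkn (q:ℤ)
      have htri := nr_rev_triangle hnR (s + (j0:ℝ)) ((j:ℝ) - (j0:ℝ))
      have hDsj : |nr (n:ℝ) ((j:ℝ) - (j0:ℝ))| - 1/2 ≤ |nr (n:ℝ) (s + (j:ℝ))| := by
        rw [show (s + (j0:ℝ)) + ((j:ℝ) - (j0:ℝ)) = s + (j:ℝ) by ring] at htri
        linarith
      have hminge1 : (1:ℝ) ≤ min (k:ℝ) ((n:ℝ)-(k:ℝ)) := le_min hkR1 (by linarith)
      have hmin2 : (k:ℝ)*((n:ℝ)-(k:ℝ))/(n:ℝ) ≤ min (k:ℝ) ((n:ℝ)-(k:ℝ)) := by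
        rcases min_cases (k:ℝ) ((n:ℝ)-(k:ℝ)) with ⟨hmn, hc⟩ | ⟨hmn, hc⟩ <;> rw [hmn] <;>
          rw [div_le_iff₀ hnR] <;> nlinarith
      have hD : (k:ℝ)*((n:ℝ)-(k:ℝ))/(2*(n:ℝ)) ≤ |nr (n:ℝ) (s + (j:ℝ))| := by
        have h5 : min (k:ℝ) ((n:ℝ)-(k:ℝ)) / 2 ≤ |nr (n:ℝ) (s + (j:ℝ))| := by linarith
        rw [show (k:ℝ)*((n:ℝ)-(k:ℝ))/(2*(n:ℝ)) = ((k:ℝ)*((n:ℝ)-(k:ℝ))/(n:ℝ))/2 by ring]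
        linarith
      have hcosarg : Real.cos ((2*Real.pi/(n:ℝ))*(s + (j:ℝ)))
          = Real.cos ((2*Real.pi/(n:ℝ)) * nr (n:ℝ) (s + (j:ℝ))) := by
        have harg : (2*Real.pi/(n:ℝ))*(s + (j:ℝ))
            = (2*Real.pi/(n:ℝ)) * nr (n:ℝ) (s + (j:ℝ)) + ((round ((s + (j:ℝ))/(n:ℝ)) : ℤ)) * (2*Real.pi) := by
          rw [nr]; push_cast; field_simp; ring
        rw [harg, Real.cos_add_int_mul_two_pi]
      have habsarg : |(2*Real.pi/(n:ℝ)) * nr (n:ℝ) (s + (j:ℝ))| ≤ Real.pi := by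
        rw [abs_mul, abs_of_pos (by positivity : (0:ℝ) < 2*Real.pi/(n:ℝ))]
        calc (2*Real.pi/(n:ℝ)) * |nr (n:ℝ) (s + (j:ℝ))| ≤ (2*Real.pi/(n:ℝ)) * ((n:ℝ)/2) :=
              mul_le_mul_of_nonneg_left (abs_nr_le hnR (s + (j:ℝ))) (by positivity)
        _ = Real.pi := by field_simp
      have hcos := Real.cos_le_one_sub_mul_cos_sq habsarg
      have hγcos : γ k ≤ δ*(1-δ)*(1 - Real.cos ((2*Real.pi/(n:ℝ))*(s + (j:ℝ)))) := by
        rw [hcosarg]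
        simp only [hγdef]
        have hD2 : ((k:ℝ)*((n:ℝ)-(k:ℝ))/(2*(n:ℝ)))^2 ≤ (nr (n:ℝ) (s + (j:ℝ)))^2 := by
          rw [← sq_abs (nr (n:ℝ) (s + (j:ℝ)))]
          apply pow_le_pow_left₀ (div_nonneg (mul_nonneg (by positivity) (by linarith)) (by positivity)) hD 2
        have h8 : 2/Real.pi^2 * ((2*Real.pi/(n:ℝ)) * nr (n:ℝ) (s + (j:ℝ)))^2
            ≤ 1 - Real.cos ((2*Real.pi/(n:ℝ)) * nr (n:ℝ) (s + (j:ℝ))) := by linarith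
        have h9 : 2*((k:ℝ)*((n:ℝ)-(k:ℝ)))^2/(n:ℝ)^4
            ≤ 2/Real.pi^2 * ((2*Real.pi/(n:ℝ)) * nr (n:ℝ) (s + (j:ℝ)))^2 := by
          have hexp : 2/Real.pi^2 * ((2*Real.pi/(n:ℝ)) * nr (n:ℝ) (s + (j:ℝ)))^2
              = 8 * (nr (n:ℝ) (s + (j:ℝ)))^2 / (n:ℝ)^2 := by
            field_simp
            ring
          have hexp2 : 2*((k:ℝ)*((n:ℝ)-(k:ℝ)))^2/(n:ℝ)^4
              = 8 * ((k:ℝ)*((n:ℝ)-(k:ℝ))/(2*(n:ℝ)))^2 / (n:ℝ)^2 := by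
            field_simp
            ring
          rw [hexp, hexp2]
          apply div_le_div_of_nonneg_right ?_ (by positivity)
          · linarith
        have h10 : 2*((k:ℝ)*((n:ℝ)-(k:ℝ)))^2/(n:ℝ)^4
            ≤ 1 - Real.cos ((2*Real.pi/(n:ℝ)) * nr (n:ℝ) (s + (j:ℝ))) := h9.trans h8
        have h11 := mul_le_mul_of_nonneg_left h10 (mul_nonneg hδ0.le h1δ.le : (0:ℝ) ≤ δ*(1-δ))
        calc 2*δ*(1-δ)*((k:ℝ)*((n:ℝ)-(k:ℝ)))^2/(n:ℝ)^4
            = δ*(1-δ) * (2*((k:ℝ)*((n:ℝ)-(k:ℝ)))^2/(n:ℝ)^4) := by ring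
        _ ≤ δ*(1-δ) * (1 - Real.cos ((2*Real.pi/(n:ℝ)) * nr (n:ℝ) (s + (j:ℝ)))) := h11
      have hwabs : ‖wa δ ((2*Real.pi/(n:ℝ))*(s + (j:ℝ)))‖ ≤ 1 - γ k := by
        have := one_sub_abs_wa hδ0.le hδ1 ((2*Real.pi/(n:ℝ))*(s + (j:ℝ)))
        linarith
      have hfin := hbound (γ k) (hγpos k hk1 hik) (hγle1 k hk1 hik) _ hwabs
      simpa only [hA] using hfin
    have hprodle : ∏ i ∈ Finset.range (n-1), A (e (i+1)) ≤ P := by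
      rw [hPdef]
      exact Finset.prod_le_prod (fun i _ => norm_nonneg _) hAk
    calc ‖h z‖ = ∏ j ∈ Finset.range n, A j := hform
    _ = ∏ k ∈ Finset.range n, A (e k) := hreindex
    _ = (∏ i ∈ Finset.range (n-1), A (e (i+1))) * A (e 0) := hsplit
    _ ≤ P * G := mul_le_mul hprodle hAe0 (norm_nonneg _) hPpos.le
  -- maximum modulus principle
  have hmax : ‖h (δ:ℂ)‖ ≤ P * G := by
    apply Complex.norm_le_of_forall_mem_frontier_norm_le Metric.isBounded_ball hdiff
    · intro w hw
      rw [frontier_ball (δ:ℂ) (ne_of_gt h1δ)] at hw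
      exact key w hw
    · rw [closure_ball (δ:ℂ) (ne_of_gt h1δ)]
      exact Metric.mem_closedBall_self h1δ.le
  have hPG : 1 ≤ P * G := le_trans hhδ hmax
  -- closed form of the product of the γ's
  set N := n - 1 with hNdef
  have hN1 : 1 ≤ N := by omega
  have hQpos : 0 < ∏ i ∈ Finset.range N, (γ (i+1)/(lam*M)) := by
    apply Finset.prod_pos
    intro i hi
    exact div_pos (hγpos (i+1) (by omega) (by have := Finset.mem_range.mp hi; omega)) hlM0
  have hPQ : P * (∏ i ∈ Finset.range N, (γ (i+1)/(lam*M))) = 1 := by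
    rw [hPdef, ← Finset.prod_mul_distrib]
    apply Finset.prod_eq_one
    intro i hi
    have hγp := hγpos (i+1) (by omega) (by have := Finset.mem_range.mp hi; omega)
    field_simp
  have hQG : (∏ i ∈ Finset.range N, (γ (i+1)/(lam*M))) ≤ G := by
    have h1 : P * (∏ i ∈ Finset.range N, (γ (i+1)/(lam*M))) ≤ P * G := by
      rw [hPQ]; exact hPG
    exact le_of_mul_le_mul_left h1 hPpos
  set c := 2*δ*(1-δ)/((n:ℝ)^4*(lam*M)) with hcdef
  have hc0 : 0 < c := by
    rw [hcdef]
    apply div_pos (by nlinarith) (by positivity)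
  have hQeq : (∏ i ∈ Finset.range N, (γ (i+1)/(lam*M)))
      = c^N * ((N.factorial : ℝ))^4 := by
    have h1 : ∀ i ∈ Finset.range N, γ (i+1)/(lam*M)
        = c * ((((i+1)*(n-1-i) : ℕ)):ℝ)^2 := by
      intro i hi
      have hin : i < N := Finset.mem_range.mp hi
      have hc1 : (((i+1)*(n-1-i) : ℕ):ℝ) = ((i:ℝ)+1)*((n:ℝ)-((i:ℝ)+1)) := by
        push_cast [Nat.cast_sub (by omega : 1 ≤ n), Nat.cast_sub (by omega : i ≤ n-1)]
        ring
      simp only [hγdef, hcdef]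
      rw [hc1]
      have hγcast : (((i:ℕ)+1:ℕ):ℝ) = (i:ℝ)+1 := by push_cast; ring
      rw [hγcast]
      field_simp
    rw [Finset.prod_congr rfl h1, Finset.prod_mul_distrib, Finset.prod_const, Finset.card_range]
    congr 1
    have h3 : ∏ i ∈ Finset.range N, ((i+1)*(n-1-i)) = N.factorial * N.factorial := by
      rw [Finset.prod_mul_distrib, Finset.prod_range_add_one_eq_factorial]
      congr 1
      have h4 := Finset.prod_range_reflect (fun j => j + 1) N
      rw [← Finset.prod_range_add_one_eq_factorial, ← h4]
      apply Finset.prod_congr rfl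
      intro i hi
      have := Finset.mem_range.mp hi
      omega
    calc ∏ i ∈ Finset.range N, ((((i+1)*(n-1-i) : ℕ)):ℝ)^2
        = (((∏ i ∈ Finset.range N, ((i+1)*(n-1-i)) : ℕ)):ℝ)^2 := by
          rw [Nat.cast_prod, Finset.prod_pow]
    _ = ((N.factorial : ℝ) * (N.factorial : ℝ))^2 := by rw [h3]; push_cast; ring
    _ = ((N.factorial : ℝ))^4 := by ring
  -- the lower bound for the product
  set r := δ/(lam*M) with hrdef
  have hr0 : 0 < r := div_pos hδ0 hlM0
  have hr4 : r ≤ 1/4 := by rw [hrdef, div_le_iff₀ hlM0]; nlinarith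
  have hNR1 : (1:ℝ) ≤ (N:ℝ) := by exact_mod_cast hN1
  have hn2N : (n:ℝ) ≤ 2*(N:ℝ) := by exact_mod_cast (by omega : n ≤ 2*N)
  have hb : r^6 ≤ c * ((N:ℝ))^4/81 := by
    rw [hrdef, hcdef]
    exact base_ineq hδ0 hδ4 hlM hnR hNR1 hn2N
  have hNfac := pow_self_le N
  have hF4 : (((N:ℝ))^4/81)^N ≤ ((N.factorial : ℝ))^4 := by
    have h1 : (((N:ℝ))^N)^4 ≤ ((3:ℝ)^N * (N.factorial:ℝ))^4 :=
      pow_le_pow_left₀ (by positivity) hNfac 4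
    have h2 : (((N:ℝ))^4/81)^N = (((N:ℝ))^N)^4 / ((3:ℝ)^N)^4 := by
      rw [div_pow]
      congr 1
      · rw [← pow_mul, ← pow_mul, Nat.mul_comm]
      · rw [show (81:ℝ) = 3^4 by norm_num, ← pow_mul, ← pow_mul, Nat.mul_comm]
    rw [h2, div_le_iff₀ (by positivity)]
    calc (((N:ℝ))^N)^4 ≤ ((3:ℝ)^N * (N.factorial:ℝ))^4 := h1
    _ = ((N.factorial:ℝ))^4 * ((3:ℝ)^N)^4 := by ring
  have hQlb : (r^6)^N ≤ c^N * ((N.factorial : ℝ))^4 := by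
    calc (r^6)^N ≤ (c * ((N:ℝ))^4/81)^N :=
          pow_le_pow_left₀ (by positivity) hb N
    _ = c^N * (((N:ℝ))^4/81)^N := by rw [mul_div_assoc, mul_pow]
    _ ≤ c^N * ((N.factorial : ℝ))^4 :=
          mul_le_mul_of_nonneg_left hF4 (pow_nonneg hc0.le N)
  -- conclude
  refine ⟨zs, ?_, ?_⟩
  · obtain ⟨φ, hφmem, hφeq⟩ := hzsJ
    refine ⟨φ, abs_le.mpr ⟨(Set.mem_Icc.mp hφmem).1, (Set.mem_Icc.mp hφmem).2⟩, ?_⟩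
    rw [← hφeq]
    rfl
  · have hexp : 6*(N:ℝ) ≤ 24*Real.pi/a := by
      have hNn : (N:ℝ) ≤ (n:ℝ) := by exact_mod_cast Nat.sub_le n 1
      calc 6*(N:ℝ) ≤ 6*(n:ℝ) := by linarith
      _ = 12*(m:ℝ) := by rw [hnm]; ring
      _ ≤ 12*(2*Real.pi/a) := by linarith
      _ = 24*Real.pi/a := by ring
    have hrp : r ^ (24*Real.pi/a) ≤ (r^6)^N := by
      have h1 : (r:ℝ) ^ ((6*N : ℕ):ℝ) = (r^6)^N := by
        rw [Real.rpow_natCast, pow_mul]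
      rw [← h1]
      apply Real.rpow_le_rpow_of_exponent_ge hr0 (by linarith : r ≤ 1)
      push_cast
      linarith
    calc r ^ (24*Real.pi/a) ≤ (r^6)^N := hrp
    _ ≤ c^N * ((N.factorial : ℝ))^4 := hQlb
    _ = ∏ i ∈ Finset.range N, (γ (i+1)/(lam*M)) := hQeq.symm
    _ ≤ G := hQG
end

section
/- Let ν₁ ∈ (0, 3/4], θ ∈ (0, π), α = ν₁ e^{iθ/2} + 1 - ν₁, β = conj(α), and let z lie on the chord from β to α. Then (i) |(z-α)(z-β)| ≤ ν₁² sin²(θ/2), and (ii) 1 - |z| ≥ ν₁(1-ν₁)(1 - cos(θ/2)); consequently for any function with |g(z)| ≤ M·|(z-α)(z-β)|/(1-|z|) on the chord, |g(z)| ≤ 8Mν₁. -/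
set_option maxHeartbeats 1000000 in
/-- Chord estimate, low-retention case `ν₁ ≤ 3/4`: bounds on `|(z-α)(z-β)|` and `1 - |z|`
for `z` on the chord from `β` to `α` of the circle of radius `ν₁` centered at `1 - ν₁`,
and the resulting bound `8Mν₁` for functions dominated by `M|(z-α)(z-β)|/(1-|z|)`. -/
theorem stmt16 (ν₁ θ : ℝ) (hν0 : 0 < ν₁) (hν : ν₁ ≤ 3 / 4)
    (hθ0 : 0 < θ) (hθ : θ < Real.pi)
    (α β : ℂ) (hα : α = ν₁ * Complex.exp ((θ / 2) * Complex.I) + (1 - ν₁ : ℝ))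
    (hβ : β = starRingEnd ℂ α)
    (z : ℂ) (hz : z ∈ segment ℝ β α) :
    ‖(z - α) * (z - β)‖ ≤ ν₁ ^ 2 * Real.sin (θ / 2) ^ 2 ∧
    ν₁ * (1 - ν₁) * (1 - Real.cos (θ / 2)) ≤ 1 - ‖z‖ ∧
    ∀ (M : ℝ) (g : ℂ → ℂ), 1 ≤ M →
      (∀ w ∈ segment ℝ β α,
        ‖g w‖ ≤ M * ‖(w - α) * (w - β)‖ / (1 - ‖w‖)) →
      ‖g z‖ ≤ 8 * M * ν₁ := by
  set c := Real.cos (θ / 2) with hc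
  set s := Real.sin (θ / 2) with hs
  have hφ0 : 0 < θ / 2 := by linarith
  have hφπ : θ / 2 < Real.pi / 2 := by linarith
  have hs0 : 0 < s := Real.sin_pos_of_pos_of_lt_pi hφ0 (by linarith [Real.pi_pos])
  have hc0 : 0 < c := Real.cos_pos_of_mem_Ioo ⟨by linarith [Real.pi_pos], hφπ⟩
  have hsc : s ^ 2 = 1 - c ^ 2 := by
    have := Real.sin_sq_add_cos_sq (θ / 2); linarith
  have hc1 : c < 1 := by nlinarith [sq_nonneg s]
  have hexp : Complex.exp ((θ : ℂ) / 2 * Complex.I) = (c : ℂ) + (s : ℂ) * Complex.I := by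
    have h2 : ((θ : ℂ) / 2) = ((θ / 2 : ℝ) : ℂ) := by push_cast; ring
    rw [h2, Complex.exp_mul_I, ← Complex.ofReal_cos, ← Complex.ofReal_sin]
  have hα' : α = ((ν₁ * c + (1 - ν₁) : ℝ) : ℂ) + ((ν₁ * s : ℝ) : ℂ) * Complex.I := by
    rw [hα, hexp]; push_cast; ring
  have hβ' : β = ((ν₁ * c + (1 - ν₁) : ℝ) : ℂ) - ((ν₁ * s : ℝ) : ℂ) * Complex.I := by
    rw [hβ, hα']
    simp [map_add, map_mul, Complex.conj_ofReal, Complex.conj_I]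
    ring
  obtain ⟨a, b, ha, hb, hab, hzab⟩ := hz
  obtain rfl : a = 1 - b := by linarith
  have hb1 : b ≤ 1 := by linarith
  have hzc : z = ((ν₁ * c + (1 - ν₁) : ℝ) : ℂ) + (((2 * b - 1) * (ν₁ * s) : ℝ) : ℂ) * Complex.I := by
    rw [← hzab, hα', hβ', Complex.real_smul, Complex.real_smul]
    push_cast; ring
  have hzα : z - α = (((2 * b - 2) * (ν₁ * s) : ℝ) : ℂ) * Complex.I := by
    rw [hzc, hα']; push_cast; ring
  have hzβ : z - β = (((2 * b) * (ν₁ * s) : ℝ) : ℂ) * Complex.I := by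
    rw [hzc, hβ']; push_cast; ring
  have hνs : 0 ≤ ν₁ * s := by positivity
  have hprod : ‖(z - α) * (z - β)‖ = 4 * b * (1 - b) * (ν₁ ^ 2 * s ^ 2) := by
    rw [hzα, hzβ, norm_mul, norm_mul, norm_mul, Complex.norm_I, Complex.norm_real, Real.norm_eq_abs,
      Complex.norm_real, Real.norm_eq_abs, abs_of_nonpos (by nlinarith), abs_of_nonneg (by nlinarith)]
    ring
  have hab4 : 4 * b * (1 - b) ≤ 1 := by nlinarith [sq_nonneg (1 - 2 * b)]
  have h1 : ‖(z - α) * (z - β)‖ ≤ ν₁ ^ 2 * s ^ 2 := by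
    rw [hprod]
    nlinarith [mul_le_mul_of_nonneg_right hab4 (by positivity : (0:ℝ) ≤ ν₁ ^ 2 * s ^ 2)]
  -- bound on |z|
  have hx1 : ν₁ * (1 - ν₁) * (1 - c) ≤ 1 / 2 := by
    nlinarith [sq_nonneg (ν₁ - 1 / 2)]
  have hid : (ν₁ * c + (1 - ν₁)) ^ 2 + (ν₁ * s) ^ 2 = 1 - 2 * (ν₁ * (1 - ν₁) * (1 - c)) := by
    linear_combination (ν₁ ^ 2) * hsc
  have hb2 : (2 * b - 1) ^ 2 ≤ 1 := by nlinarith [sq_nonneg (1 - 2 * b)]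
  have hy : ((2 * b - 1) * (ν₁ * s)) ^ 2 ≤ (ν₁ * s) ^ 2 := by
    rw [mul_pow]
    calc (2 * b - 1) ^ 2 * (ν₁ * s) ^ 2 ≤ 1 * (ν₁ * s) ^ 2 :=
          mul_le_mul_of_nonneg_right hb2 (sq_nonneg _)
      _ = (ν₁ * s) ^ 2 := one_mul _
  have h2 : ‖z‖ ≤ 1 - ν₁ * (1 - ν₁) * (1 - c) := by
    have habs : ‖z‖ =
        Real.sqrt ((ν₁ * c + (1 - ν₁)) ^ 2 + ((2 * b - 1) * (ν₁ * s)) ^ 2) := by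
      rw [hzc, Complex.norm_def, Complex.normSq_apply]
      congr 1
      simp
      ring
    rw [habs]
    have hsq : (1 - ν₁ * (1 - ν₁) * (1 - c)) ^ 2 =
        (ν₁ * c + (1 - ν₁)) ^ 2 + (ν₁ * s) ^ 2 + (ν₁ * (1 - ν₁) * (1 - c)) ^ 2 := by
      linear_combination -hid
    have hle : (ν₁ * c + (1 - ν₁)) ^ 2 + ((2 * b - 1) * (ν₁ * s)) ^ 2
        ≤ (1 - ν₁ * (1 - ν₁) * (1 - c)) ^ 2 := by
      linarith [hy, sq_nonneg (ν₁ * (1 - ν₁) * (1 - c)), hsq]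
    calc Real.sqrt ((ν₁ * c + (1 - ν₁)) ^ 2 + ((2 * b - 1) * (ν₁ * s)) ^ 2)
        ≤ Real.sqrt ((1 - ν₁ * (1 - ν₁) * (1 - c)) ^ 2) := Real.sqrt_le_sqrt hle
      _ = 1 - ν₁ * (1 - ν₁) * (1 - c) := Real.sqrt_sq (by linarith)
  have h2' : ν₁ * (1 - ν₁) * (1 - c) ≤ 1 - ‖z‖ := by linarith
  refine ⟨h1, h2', ?_⟩
  intro M g hM hg
  have hM0 : (0:ℝ) ≤ M := by linarith
  have hd0 : 0 < ν₁ * (1 - ν₁) * (1 - c) := by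
    apply mul_pos (mul_pos hν0 (by linarith)) (by linarith)
  have hD : 0 < 1 - ‖z‖ := lt_of_lt_of_le hd0 h2'
  have hgz := hg z ⟨1 - b, b, ha, hb, hab, hzab⟩
  have hA : ‖(z - α) * (z - β)‖ ≤ ν₁ ^ 2 * ((1 - c) * (1 + c)) := by
    have : ν₁ ^ 2 * s ^ 2 = ν₁ ^ 2 * ((1 - c) * (1 + c)) := by
      rw [hsc]; ring
    linarith [h1]
  have h8 : 1 + c ≤ 8 * (1 - ν₁) := by linarith
  have key : M * ‖(z - α) * (z - β)‖ / (1 - ‖z‖) ≤ 8 * M * ν₁ := by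
    rw [div_le_iff₀ hD]
    have t1 : M * ‖(z - α) * (z - β)‖ ≤ M * (ν₁ ^ 2 * ((1 - c) * (1 + c))) :=
      mul_le_mul_of_nonneg_left hA hM0
    have h0 : (0:ℝ) ≤ M * ν₁ ^ 2 * (1 - c) :=
      mul_nonneg (mul_nonneg hM0 (sq_nonneg ν₁)) (by linarith)
    have t2 : M * (ν₁ ^ 2 * ((1 - c) * (1 + c))) ≤ 8 * M * ν₁ * (ν₁ * (1 - ν₁) * (1 - c)) := by
      calc M * (ν₁ ^ 2 * ((1 - c) * (1 + c))) = M * ν₁ ^ 2 * (1 - c) * (1 + c) := by ring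
        _ ≤ M * ν₁ ^ 2 * (1 - c) * (8 * (1 - ν₁)) := mul_le_mul_of_nonneg_left h8 h0
        _ = 8 * M * ν₁ * (ν₁ * (1 - ν₁) * (1 - c)) := by ring
    have t3 : 8 * M * ν₁ * (ν₁ * (1 - ν₁) * (1 - c)) ≤ 8 * M * ν₁ * (1 - ‖z‖) :=
      mul_le_mul_of_nonneg_left h2' (mul_nonneg (mul_nonneg (by norm_num) hM0) hν0.le)
    linarith
  linarith
end

section
/- Let θ ∈ (0,π), ν₁ ∈ (3/4, 1], α = ν₁ e^{iθ/2} + 1 - ν₁, β = conj(α). For every point z on the chord from β to α at distance τ ∈ [0, ν₁ sin(θ/2)] from α, one has 1 - |z| ≥ τ·sin(θ/2)/4 and |(z-α)(z-β)| ≤ 2τ; hence any g with |g(z)| ≤ M·|(z-α)(z-β)|/(1-|z|) satisfies |g(z)| ≤ 8M/sin(θ/2) on the chord. -/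
set_option maxHeartbeats 1000000 in
/-- Chord estimate, high-retention case `ν₁ > 3/4`: for the point `z` of the chord from
`β` to `α` at distance `τ ∈ [0, ν₁ sin(θ/2)]` from `α`, bounds on `1 - |z|` and
`|(z-α)(z-β)|`, and the resulting bound `8M/sin(θ/2)` for functions dominated by
`M|(w-α)(w-β)|/(1-|w|)` on the chord. -/
theorem stmt17 (ν₁ θ τ : ℝ) (hν0 : 3 / 4 < ν₁) (hν : ν₁ ≤ 1)
    (hθ0 : 0 < θ) (hθ : θ < Real.pi)
    (hτ0 : 0 ≤ τ) (hτ : τ ≤ ν₁ * Real.sin (θ / 2))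
    (α β : ℂ) (hα : α = ν₁ * Complex.exp ((θ / 2) * Complex.I) + (1 - ν₁ : ℝ))
    (hβ : β = starRingEnd ℂ α)
    (z : ℂ) (hz : z = α - τ * Complex.I) :
    τ * Real.sin (θ / 2) / 4 ≤ 1 - ‖z‖ ∧
    ‖(z - α) * (z - β)‖ ≤ 2 * τ ∧
    ∀ (M : ℝ) (g : ℂ → ℂ), 1 ≤ M →
      (∀ w ∈ segment ℝ β α,
        ‖g w‖ ≤ M * ‖(w - α) * (w - β)‖ / (1 - ‖w‖)) →
      ‖g z‖ ≤ 8 * M / Real.sin (θ / 2) := by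
  set s := Real.sin (θ / 2) with hsdef
  set c := Real.cos (θ / 2) with hcdef
  have hs : 0 < s := Real.sin_pos_of_pos_of_lt_pi (by linarith) (by linarith [Real.pi_pos])
  have hsle1 : s ≤ 1 := Real.sin_le_one _
  have hc1 : c ≤ 1 := Real.cos_le_one _
  have hsc : s ^ 2 + c ^ 2 = 1 := Real.sin_sq_add_cos_sq _
  have hθc : ((θ : ℂ) / 2) = ((θ / 2 : ℝ) : ℂ) := by push_cast; ring
  rw [hθc, Complex.exp_mul_I, ← Complex.ofReal_cos, ← Complex.ofReal_sin,
    ← hsdef, ← hcdef] at hα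
  have hzre : z.re = 1 - ν₁ * (1 - c) := by
    simp [hz, hα]; ring
  have hzim : z.im = ν₁ * s - τ := by
    simp [hz, hα]
  have hsq : ‖z‖ ^ 2 = (1 - ν₁ * (1 - c)) ^ 2 + (ν₁ * s - τ) ^ 2 := by
    rw [Complex.sq_norm, Complex.normSq_apply, hzre, hzim]; ring
  have key : (1 - ν₁ * (1 - c)) ^ 2 + (ν₁ * s - τ) ^ 2
      = 1 - 2 * ν₁ * (1 - ν₁) * (1 - c) - 2 * ν₁ * s * τ + τ ^ 2 := by
    linear_combination (ν₁ ^ 2) * hsc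
  have hsqle : ‖z‖ ^ 2 ≤ 1 - ν₁ * s * τ := by
    rw [hsq, key]
    nlinarith [mul_nonneg (mul_nonneg (by linarith : (0:ℝ) ≤ ν₁) (by linarith : (0:ℝ) ≤ 1 - ν₁)) (by linarith : (0:ℝ) ≤ 1 - c),
      mul_nonneg hτ0 (sub_nonneg.2 hτ)]
  have habs0 : 0 ≤ ‖z‖ := norm_nonneg z
  have hστ : 0 ≤ s * τ := mul_nonneg hs.le hτ0
  have hν₁s : ν₁ * s ≤ 1 := mul_le_one₀ hν hs.le hsle1
  have hτle1 : τ ≤ 1 := le_trans hτ hν₁s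
  have hsτ1 : s * τ ≤ 1 := mul_le_one₀ hsle1 hτ0 hτle1
  have hzle1 : ‖z‖ ≤ 1 := by nlinarith
  have h1 : τ * s / 4 ≤ 1 - ‖z‖ := by
    nlinarith [mul_nonneg hστ hστ, mul_nonneg habs0 hστ]
  -- factors
  have hzα : z - α = -(τ * Complex.I) := by rw [hz]; ring
  have hβα : α - β = ((2 * ν₁ * s : ℝ) : ℂ) * Complex.I := by
    rw [hβ, hα]
    simp [Complex.ext_iff]
    ring
  have hzβ : z - β = ((2 * ν₁ * s - τ : ℝ) : ℂ) * Complex.I := by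
    rw [hz]
    push_cast at hβα ⊢
    linear_combination hβα
  have hν₁s0 : 0 ≤ ν₁ * s := mul_nonneg (by linarith) hs.le
  have hτν : τ ≤ 2 * ν₁ * s := by linarith
  have habsprod : ‖(z - α) * (z - β)‖ = τ * (2 * ν₁ * s - τ) := by
    have e1 : ‖(-(↑τ * Complex.I) : ℂ)‖ = τ := by
      rw [norm_neg, norm_mul, Complex.norm_I, Complex.norm_real, Real.norm_eq_abs,
        abs_of_nonneg hτ0, mul_one]
    have e2 : ‖((2 * ν₁ * s - τ : ℝ) : ℂ) * Complex.I‖ = 2 * ν₁ * s - τ := by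
      rw [norm_mul, Complex.norm_I, Complex.norm_real, Real.norm_eq_abs,
        abs_of_nonneg (by linarith : (0:ℝ) ≤ 2 * ν₁ * s - τ), mul_one]
    rw [hzα, hzβ, norm_mul, e1, e2]
  have h2 : ‖(z - α) * (z - β)‖ ≤ 2 * τ := by
    rw [habsprod]
    have hle2 : 2 * ν₁ * s - τ ≤ 2 := by linarith
    calc τ * (2 * ν₁ * s - τ) ≤ τ * 2 := mul_le_mul_of_nonneg_left hle2 hτ0
      _ = 2 * τ := by ring
  refine ⟨h1, h2, ?_⟩
  intro M g hM hg
  have hden : (0:ℝ) < 2 * ν₁ * s := mul_pos (by linarith : (0:ℝ) < 2 * ν₁) hs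
  have hβeq : β = α - ((2 * ν₁ * s : ℝ) : ℂ) * Complex.I := by
    rw [← hβα]; ring
  have hzseg : z ∈ segment ℝ β α := by
    refine ⟨τ / (2 * ν₁ * s), 1 - τ / (2 * ν₁ * s), by positivity, ?_, by ring, ?_⟩
    · have : τ / (2 * ν₁ * s) ≤ 1 := by rw [div_le_one hden]; linarith
      linarith
    · rw [Complex.real_smul, Complex.real_smul, hz, hβeq]
      have hν₁ne : (ν₁ : ℂ) ≠ 0 := by exact_mod_cast (by linarith : ν₁ ≠ 0)
      have hsne' : (s : ℂ) ≠ 0 := by exact_mod_cast hs.ne'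
      push_cast
      field_simp
      ring
  have hbound := hg z hzseg
  rcases eq_or_lt_of_le hτ0 with hτz | hτpos
  · have hP : ‖(z - α) * (z - β)‖ = 0 := by
      rw [habsprod, ← hτz]; ring
    have h0 : ‖g z‖ ≤ 0 := by
      rw [hP] at hbound; simpa using hbound
    have h0' : ‖g z‖ = 0 := le_antisymm h0 (norm_nonneg _)
    rw [h0']
    positivity
  · have hdenz : 0 < 1 - ‖z‖ := by nlinarith
    have hnum : M * ‖(z - α) * (z - β)‖ ≤ M * (2 * τ) :=
      mul_le_mul_of_nonneg_left h2 (by linarith)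
    have hstep : M * ‖(z - α) * (z - β)‖ / (1 - ‖z‖)
        ≤ M * (2 * τ) / (s * τ / 4) := by
      apply div_le_div₀ (by positivity) hnum (by positivity)
      linarith
    have hτne : τ ≠ 0 := hτpos.ne'
    have hsne : s ≠ 0 := hs.ne'
    have heq : M * (2 * τ) / (s * τ / 4) = 8 * M / s := by
      field_simp
      ring
    calc ‖g z‖
        ≤ M * ‖(z - α) * (z - β)‖ / (1 - ‖z‖) := hbound
      _ ≤ M * (2 * τ) / (s * τ / 4) := hstep
      _ = 8 * M / s := heq
end
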